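/- arXiv:1609.08845 — 3 statements merged into one kernel-verified Lean document; each statement's English description precedes it below -/
import Mathlib

section
/- Let D² ∼ Exp(λπ), K > 0, β > 2. Then lim_{s→∞} −(1/s)·log P(log(1 + K·D^{−β}) > s) = 2/β. -/
open MeasureTheory ProbabilityTheory Real Set Filter

lemma aux_tendsto (K β a : ℝ) (hK : 0 < K) (hβ : 0 < β) (ha : 0 < a) :
    Tendsto (fun s : ℝ => -(1 / s) *
        Real.log (1 - Real.exp (-(a * (K / (Real.exp s - 1)) ^ (2 / β)))))
      atTop (nhds (2 / β)) := by
  have hβ2 : 0 < 2 / β := by positivity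
  set c : ℝ → ℝ := fun s => (K / (Real.exp s - 1)) ^ (2 / β) with hc
  set x : ℝ → ℝ := fun s => a * c s with hxdef
  -- basic positivity for s ≥ 1
  have hm : ∀ s : ℝ, 1 ≤ s → 0 < Real.exp s - 1 := by
    intro s hs
    have : (1:ℝ) < Real.exp s := by
      have : Real.exp 0 < Real.exp s := Real.exp_lt_exp.2 (by linarith)
      simpa using this
    linarith
  have hcpos : ∀ s : ℝ, 1 ≤ s → 0 < c s := by
    intro s hs
    exact Real.rpow_pos_of_pos (div_pos hK (hm s hs)) _
  have hxpos : ∀ s : ℝ, 1 ≤ s → 0 < x s := fun s hs => mul_pos ha (hcpos s hs)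
  -- c → 0
  have hexp : Tendsto (fun s : ℝ => Real.exp s - 1) atTop atTop :=
    tendsto_atTop_add_const_right _ (-1) Real.tendsto_exp_atTop
  have hdiv : Tendsto (fun s : ℝ => K / (Real.exp s - 1)) atTop (nhds 0) :=
    Tendsto.div_atTop tendsto_const_nhds hexp
  have hcont : ContinuousAt (fun y : ℝ => y ^ (2 / β)) 0 :=
    Real.continuousAt_rpow_const 0 (2 / β) (Or.inr hβ2.le)
  have hc0 : Tendsto c atTop (nhds 0) := by
    have := hcont.tendsto.comp hdiv
    simpa [hc, Function.comp_def, Real.zero_rpow (ne_of_gt hβ2)] using this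
  have hx0 : Tendsto x atTop (nhds 0) := by
    have := hc0.const_mul a
    simpa [hxdef] using this
  -- ratio (1 - exp(-x))/x → 1
  have hslope : Tendsto (fun t : ℝ => (Real.exp t - 1) / t) (nhdsWithin (0:ℝ) {(0:ℝ)}ᶜ) (nhds 1) := by
    have h := Real.hasDerivAt_exp 0
    rw [hasDerivAt_iff_tendsto_slope] at h
    have : (slope Real.exp 0) = fun t : ℝ => (Real.exp t - 1) / t := by
      funext t; simp [slope_def_field, Real.exp_zero]
    rw [this] at h
    simpa using h
  have hnx : Tendsto (fun s => -(x s)) atTop (nhdsWithin (0:ℝ) {(0:ℝ)}ᶜ) := by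
    rw [tendsto_nhdsWithin_iff]
    refine ⟨by simpa using hx0.neg, ?_⟩
    filter_upwards [eventually_ge_atTop (1:ℝ)] with s hs
    simpa using (ne_of_lt (neg_neg_of_pos (hxpos s hs) : -(x s) < 0))
  have hratio : Tendsto (fun s => (1 - Real.exp (-(x s))) / (x s)) atTop (nhds 1) := by
    have h := hslope.comp hnx
    refine h.congr fun s => ?_
    show (Real.exp (-(x s)) - 1) / (-(x s)) = (1 - Real.exp (-(x s))) / x s
    rw [div_neg, ← neg_div, neg_sub]
  -- the correction term G
  set G : ℝ → ℝ := fun s => Real.log ((1 - Real.exp (-(x s))) / x s) + Real.log a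
      + (2 / β) * Real.log K - (2 / β) * Real.log (1 - Real.exp (-s)) with hGdef
  have hG : Tendsto G atTop (nhds (0 + Real.log a + (2 / β) * Real.log K - (2 / β) * 0)) := by
    have h1 : Tendsto (fun s => Real.log ((1 - Real.exp (-(x s))) / x s)) atTop (nhds 0) := by
      have := (Real.continuousAt_log one_ne_zero).tendsto.comp hratio
      simpa [Function.comp_def] using this
    have h2 : Tendsto (fun s : ℝ => Real.log (1 - Real.exp (-s))) atTop (nhds 0) := by
      have he : Tendsto (fun s : ℝ => 1 - Real.exp (-s)) atTop (nhds 1) := by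
        have := Real.tendsto_exp_neg_atTop_nhds_zero
        simpa using tendsto_const_nhds.sub this
      have := (Real.continuousAt_log one_ne_zero).tendsto.comp he
      simpa [Function.comp_def] using this
    exact ((h1.add tendsto_const_nhds).add tendsto_const_nhds).sub (h2.const_mul (2 / β))
  have hinv : Tendsto (fun s : ℝ => 1 / s) atTop (nhds 0) := by
    simpa [one_div] using tendsto_inv_atTop_zero
  have hmain : Tendsto (fun s : ℝ => 2 / β - (1 / s) * G s) atTop (nhds (2 / β)) := by
    have h := (tendsto_const_nhds (x := (2:ℝ) / β) (f := atTop)).sub (hinv.mul hG)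
    simpa using h
  refine hmain.congr' ?_
  filter_upwards [eventually_ge_atTop (1:ℝ)] with s hs
  have hs0 : (0:ℝ) < s := by linarith
  have hms : 0 < Real.exp s - 1 := hm s hs
  have hcs : 0 < c s := hcpos s hs
  have hxs : 0 < x s := hxpos s hs
  have h1e : 0 < 1 - Real.exp (-(x s)) := by
    have : Real.exp (-(x s)) < 1 := Real.exp_lt_one_iff.2 (by linarith)
    linarith
  have h1s : 0 < 1 - Real.exp (-s) := by
    have : Real.exp (-s) < 1 := Real.exp_lt_one_iff.2 (by linarith)
    linarith
  have hlog1 : Real.log (1 - Real.exp (-(x s)))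
      = Real.log ((1 - Real.exp (-(x s))) / x s) + Real.log (x s) := by
    rw [Real.log_div (ne_of_gt h1e) (ne_of_gt hxs)]; ring
  have hlogexp : Real.log (Real.exp s - 1) = s + Real.log (1 - Real.exp (-s)) := by
    have h : Real.exp s - 1 = Real.exp s * (1 - Real.exp (-s)) := by
      rw [mul_sub, mul_one, ← Real.exp_add]; simp
    rw [h, Real.log_mul (Real.exp_ne_zero s) (ne_of_gt h1s), Real.log_exp]
  have hlogx : Real.log (x s) = Real.log a
      + (2 / β) * (Real.log K - s - Real.log (1 - Real.exp (-s))) := by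
    rw [hxdef]
    rw [Real.log_mul (ne_of_gt ha) (ne_of_gt hcs)]
    have : Real.log (c s) = (2 / β) * (Real.log K - s - Real.log (1 - Real.exp (-s))) := by
      rw [hc]
      rw [Real.log_rpow (div_pos hK hms), Real.log_div (ne_of_gt hK) (ne_of_gt hms), hlogexp]
      ring
    rw [this]
  have hss : (1 / s) * s = 1 := by field_simp
  have key : -(1 / s) * Real.log (1 - Real.exp (-(x s))) = 2 / β - (1 / s) * G s := by
    rw [hlog1, hlogx, hGdef]
    field_simp
    ring
  exact key.symm

/-- If `D² ∼ Exp(λπ)`, `K > 0`, `β > 2`, then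
`lim_{s→∞} −(1/s)·log P(log(1 + K·D^{−β}) > s) = 2/β`. -/
theorem stmt_4 {Ω : Type*} [MeasureSpace Ω] [IsProbabilityMeasure (ℙ : Measure Ω)]
    (lam K β : ℝ) (hlam : 0 < lam) (hK : 0 < K) (hβ : 2 < β)
    (D : Ω → ℝ) (hmD : Measurable D) (hDpos : ∀ ω, 0 < D ω)
    (hD2 : ∀ t : ℝ, 0 ≤ t →
      ℙ {ω | t < (D ω) ^ 2} = ENNReal.ofReal (Real.exp (-(lam * Real.pi * t)))) :
    Tendsto (fun s : ℝ =>
        -(1 / s) * Real.log ((ℙ {ω | s < Real.log (1 + K * D ω ^ (-β))}).toReal))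
      atTop (nhds (2 / β)) := by
  have hβ0 : 0 < β := by linarith
  have hβ2 : 0 < 2 / β := by positivity
  have ha1 : 0 < lam * Real.pi := by positivity
  have ha2 : 0 < lam * Real.pi / 2 := by positivity
  set c : ℝ → ℝ := fun s => (K / (Real.exp s - 1)) ^ (2 / β) with hc
  have hm : ∀ s : ℝ, 1 ≤ s → 0 < Real.exp s - 1 := by
    intro s hs
    have : Real.exp 0 < Real.exp s := Real.exp_lt_exp.2 (by linarith)
    simp only [Real.exp_zero] at this
    linarith
  have hcpos : ∀ s : ℝ, 1 ≤ s → 0 < c s := fun s hs =>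
    Real.rpow_pos_of_pos (div_pos hK (hm s hs)) _
  -- the event coincides with `{D² < c s}`
  have hset : ∀ s : ℝ, 1 ≤ s →
      {ω | s < Real.log (1 + K * D ω ^ (-β))} = {ω | D ω ^ 2 < c s} := by
    intro s hs
    ext ω
    have hd := hDpos ω
    have hdb : 0 < D ω ^ β := Real.rpow_pos_of_pos hd β
    have hy : 0 < K * D ω ^ (-β) := mul_pos hK (Real.rpow_pos_of_pos hd _)
    have h1y : 0 < 1 + K * D ω ^ (-β) := by linarith
    have hms := hm s hs
    have hmpos : 0 < (Real.exp s - 1) / K := div_pos hms hK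
    have e1 : Real.exp s < 1 + K * (D ω ^ β)⁻¹ ↔
        (Real.exp s - 1) / K < (D ω ^ β)⁻¹ := by
      rw [div_lt_iff₀ hK]
      constructor <;> intro h <;> nlinarith
    have e4 : (D ω ^ β) ^ (2 / β) = D ω ^ 2 := by
      have hb2 : β * (2 / β) = 2 := by field_simp
      rw [← Real.rpow_mul hd.le, hb2,
        show ((2:ℝ)) = ((2:ℕ):ℝ) by norm_num, Real.rpow_natCast]
    have e5 : (((Real.exp s - 1) / K)⁻¹) ^ (2 / β) = c s := by
      rw [hc, inv_div]
    simp only [mem_setOf_eq]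
    rw [Real.lt_log_iff_exp_lt h1y, Real.rpow_neg hd.le, e1,
      lt_inv_comm₀ hmpos hdb, ← Real.rpow_lt_rpow_iff hdb.le (inv_pos.2 hmpos).le hβ2,
      e4, e5]
  set p : ℝ → ℝ := fun s => (ℙ {ω | D ω ^ 2 < c s}).toReal with hp
  have hmX : Measurable fun ω : Ω => D ω ^ 2 := hmD.pow_const 2
  have hEmeas : ∀ t : ℝ, MeasurableSet {ω : Ω | t < D ω ^ 2} := fun t =>
    measurableSet_lt measurable_const hmX
  -- upper bound
  have hub : ∀ s : ℝ, 1 ≤ s → p s ≤ 1 - Real.exp (-(lam * Real.pi * c s)) := by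
    intro s hs
    have hcs := hcpos s hs
    have hsub : {ω : Ω | D ω ^ 2 < c s} ⊆ {ω : Ω | c s < D ω ^ 2}ᶜ := by
      intro ω h
      simp only [mem_compl_iff, mem_setOf_eq, not_lt] at *
      linarith
    have h1 : ℙ {ω | D ω ^ 2 < c s}
        ≤ 1 - ENNReal.ofReal (Real.exp (-(lam * Real.pi * c s))) := by
      calc ℙ {ω | D ω ^ 2 < c s} ≤ ℙ ({ω : Ω | c s < D ω ^ 2}ᶜ) := measure_mono hsub
        _ = 1 - ℙ {ω : Ω | c s < D ω ^ 2} := prob_compl_eq_one_sub (hEmeas (c s))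
        _ = _ := by rw [hD2 (c s) hcs.le]
    have hE1 : ENNReal.ofReal (Real.exp (-(lam * Real.pi * c s))) ≤ 1 := by
      rw [ENNReal.ofReal_le_one]
      exact Real.exp_le_one_iff.2 (by nlinarith)
    have h2 : p s ≤ (1 - ENNReal.ofReal (Real.exp (-(lam * Real.pi * c s)))).toReal :=
      ENNReal.toReal_mono (ne_top_of_le_ne_top ENNReal.one_ne_top tsub_le_self) h1
    rwa [ENNReal.toReal_sub_of_le hE1 ENNReal.one_ne_top, ENNReal.toReal_one,
      ENNReal.toReal_ofReal (Real.exp_nonneg _)] at h2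
  -- lower bound
  have hlb : ∀ s : ℝ, 1 ≤ s → 1 - Real.exp (-(lam * Real.pi / 2 * c s)) ≤ p s := by
    intro s hs
    have hcs := hcpos s hs
    have hsub : {ω : Ω | c s / 2 < D ω ^ 2}ᶜ ⊆ {ω : Ω | D ω ^ 2 < c s} := by
      intro ω h
      simp only [mem_compl_iff, mem_setOf_eq, not_lt] at *
      linarith
    have h1 : 1 - ENNReal.ofReal (Real.exp (-(lam * Real.pi * (c s / 2))))
        ≤ ℙ {ω | D ω ^ 2 < c s} := by
      calc 1 - ENNReal.ofReal (Real.exp (-(lam * Real.pi * (c s / 2))))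
          = 1 - ℙ {ω : Ω | c s / 2 < D ω ^ 2} := by rw [hD2 (c s / 2) (by positivity)]
        _ = ℙ ({ω : Ω | c s / 2 < D ω ^ 2}ᶜ) := (prob_compl_eq_one_sub (hEmeas _)).symm
        _ ≤ _ := measure_mono hsub
    have hE1 : ENNReal.ofReal (Real.exp (-(lam * Real.pi * (c s / 2)))) ≤ 1 := by
      rw [ENNReal.ofReal_le_one]
      exact Real.exp_le_one_iff.2 (by nlinarith)
    have h2 := ENNReal.toReal_mono (measure_ne_top _ _) h1
    rw [ENNReal.toReal_sub_of_le hE1 ENNReal.one_ne_top, ENNReal.toReal_one,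
      ENNReal.toReal_ofReal (Real.exp_nonneg _)] at h2
    have harg : lam * Real.pi * (c s / 2) = lam * Real.pi / 2 * c s := by ring
    rwa [harg] at h2
  -- sandwich
  refine tendsto_of_tendsto_of_tendsto_of_le_of_le'
    (aux_tendsto K β (lam * Real.pi) hK hβ0 ha1)
    (aux_tendsto K β (lam * Real.pi / 2) hK hβ0 ha2) ?_ ?_
  · filter_upwards [eventually_ge_atTop (1:ℝ)] with s hs
    rw [hset s hs]
    have hcs := hcpos s hs
    have hLpos : 0 < 1 - Real.exp (-(lam * Real.pi / 2 * c s)) := by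
      have : Real.exp (-(lam * Real.pi / 2 * c s)) < 1 :=
        Real.exp_lt_one_iff.2 (by nlinarith)
      linarith
    have hppos : 0 < p s := lt_of_lt_of_le hLpos (hlb s hs)
    have hlog : Real.log (p s) ≤ Real.log (1 - Real.exp (-(lam * Real.pi * c s))) :=
      (Real.log_le_log_iff hppos (lt_of_lt_of_le hppos (hub s hs))).2 (hub s hs)
    exact mul_le_mul_of_nonpos_left hlog (by positivity |> neg_nonpos_of_nonneg)
  · filter_upwards [eventually_ge_atTop (1:ℝ)] with s hs
    rw [hset s hs]
    have hcs := hcpos s hs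
    have hLpos : 0 < 1 - Real.exp (-(lam * Real.pi / 2 * c s)) := by
      have : Real.exp (-(lam * Real.pi / 2 * c s)) < 1 :=
        Real.exp_lt_one_iff.2 (by nlinarith)
      linarith
    have hppos : 0 < p s := lt_of_lt_of_le hLpos (hlb s hs)
    have hlog : Real.log (1 - Real.exp (-(lam * Real.pi / 2 * c s))) ≤ Real.log (p s) :=
      (Real.log_le_log_iff hLpos hppos).2 (hlb s hs)
    exact mul_le_mul_of_nonpos_left hlog (by positivity |> neg_nonpos_of_nonneg)
end

section
/- Let N be a Poisson random variable with parameter θ > 0 and let c > 1 be a constant. Along any sequence s_n → ∞ with c·s_n ∈ ℕ, one has lim_{n→∞} −(1/(s_n·log s_n))·log P(N + 1 > c·s_n) = c. -/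
open MeasureTheory ProbabilityTheory Real Set Filter

-- log of factorial bounds
lemma logfac_ub (m : ℕ) : Real.log (Nat.factorial m) ≤ m * Real.log m := by
  have h : (Nat.factorial m : ℝ) ≤ (m : ℝ) ^ m := by
    exact_mod_cast Nat.factorial_le_pow m
  calc Real.log (Nat.factorial m) ≤ Real.log ((m:ℝ)^m) :=
        Real.log_le_log (by exact_mod_cast Nat.factorial_pos m) h
    _ = m * Real.log m := Real.log_pow m m

lemma logfac_lb (m : ℕ) : m * Real.log m - m ≤ Real.log (Nat.factorial m) := by
  rcases Nat.eq_zero_or_pos m with h0 | h0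
  · subst h0; simp
  · have hmp : (0:ℝ) < m := by exact_mod_cast h0
    have h : (m:ℝ) ^ m ≤ Real.exp m * Nat.factorial m := by
      have := Real.pow_div_factorial_le_exp (x := (m:ℝ)) hmp.le m
      rw [div_le_iff₀ (by exact_mod_cast Nat.factorial_pos m)] at this
      linarith [this]
    have := Real.log_le_log (pow_pos hmp m) h
    rw [Real.log_pow, Real.log_mul (Real.exp_ne_zero _)
      (by exact_mod_cast (Nat.factorial_pos m).ne'), Real.log_exp] at this
    linarith

lemma tail_ub {Ω : Type*} [MeasureSpace Ω] [IsProbabilityMeasure (ℙ : Measure Ω)]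
    (θ : ℝ) (hθ : 0 < θ) (N : Ω → ℕ)
    (hN : ∀ k : ℕ, ℙ {ω | N ω = k} =
      ENNReal.ofReal (Real.exp (-θ) * θ ^ k / (Nat.factorial k)))
    (m : ℕ) (hm : 2 * θ ≤ m + 1) :
    ℙ {ω | m ≤ N ω} ≤ ENNReal.ofReal (2 * (Real.exp (-θ) * θ ^ m / (Nat.factorial m))) := by
  set a : ℝ := Real.exp (-θ) * θ ^ m / (Nat.factorial m) with ha_def
  have ha : 0 < a := div_pos (mul_pos (Real.exp_pos _) (pow_pos hθ _))
    (by exact_mod_cast Nat.factorial_pos m)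
  have hset : {ω | m ≤ N ω} = ⋃ j : ℕ, {ω | N ω = m + j} := by
    ext ω
    simp only [mem_setOf_eq, mem_iUnion]
    constructor
    · intro h; exact ⟨N ω - m, by omega⟩
    · rintro ⟨j, hj⟩; omega
  rw [hset]
  have termb : ∀ j : ℕ, ℙ {ω | N ω = m + j} ≤ ENNReal.ofReal a * (ENNReal.ofReal 2⁻¹) ^ j := by
    intro j
    rw [hN (m + j), ← ENNReal.ofReal_pow (by norm_num),
      ← ENNReal.ofReal_mul ha.le]
    apply ENNReal.ofReal_le_ofReal
    have hfac : (Nat.factorial m : ℝ) * (m + 1) ^ j ≤ (Nat.factorial (m + j) : ℝ) := by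
      exact_mod_cast Nat.factorial_mul_pow_le_factorial (m := m) (n := j)
    have hden : (0:ℝ) < (Nat.factorial m : ℝ) * (m + 1) ^ j := by positivity
    have h1 : θ ^ (m + j) / (Nat.factorial (m + j) : ℝ)
        ≤ θ ^ (m + j) / ((Nat.factorial m : ℝ) * (m + 1) ^ j) :=
      div_le_div_of_nonneg_left (by positivity) hden hfac
    have h2 : θ ^ (m + j) / ((Nat.factorial m : ℝ) * (m + 1) ^ j)
        = (θ ^ m / Nat.factorial m) * (θ / (m + 1)) ^ j := by
      rw [pow_add, div_pow]
      field_simp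
    have h3 : (θ / (m + 1)) ^ j ≤ (2⁻¹ : ℝ) ^ j := by
      apply pow_le_pow_left₀ (by positivity)
      rw [div_le_iff₀ (by positivity)]
      linarith
    calc Real.exp (-θ) * θ ^ (m + j) / (Nat.factorial (m + j))
        = Real.exp (-θ) * (θ ^ (m + j) / (Nat.factorial (m + j))) := by ring
      _ ≤ Real.exp (-θ) * ((θ ^ m / Nat.factorial m) * (θ / (m + 1)) ^ j) := by
          rw [← h2]; exact mul_le_mul_of_nonneg_left h1 (Real.exp_pos _).le
      _ ≤ Real.exp (-θ) * ((θ ^ m / Nat.factorial m) * (2⁻¹ : ℝ) ^ j) := by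
          apply mul_le_mul_of_nonneg_left _ (Real.exp_pos _).le
          exact mul_le_mul_of_nonneg_left h3 (by positivity)
      _ = a * (2⁻¹ : ℝ) ^ j := by rw [ha_def]; ring
  calc ℙ (⋃ j : ℕ, {ω | N ω = m + j}) ≤ ∑' j : ℕ, ℙ {ω | N ω = m + j} := measure_iUnion_le _
    _ ≤ ∑' j : ℕ, ENNReal.ofReal a * (ENNReal.ofReal 2⁻¹) ^ j := ENNReal.tsum_le_tsum termb
    _ = ENNReal.ofReal a * ∑' j : ℕ, (ENNReal.ofReal 2⁻¹) ^ j := ENNReal.tsum_mul_left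
    _ = ENNReal.ofReal a * 2 := by
        rw [ENNReal.tsum_geometric]
        congr 1
        rw [show ENNReal.ofReal 2⁻¹ = 2⁻¹ by
          rw [ENNReal.ofReal_inv_of_pos (by norm_num)]; norm_num]
        rw [ENNReal.one_sub_inv_two, inv_inv]
    _ = ENNReal.ofReal (2 * a) := by
        rw [ENNReal.ofReal_mul (by norm_num), mul_comm]
        congr 1
        norm_num

/-- For `N ∼ Poisson(θ)` and `c > 1`, along any sequence `s_n → ∞` with `c·s_n ∈ ℕ`,
`lim_{n→∞} −(1/(s_n·log s_n))·log P(N + 1 > c·s_n) = c`. -/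
theorem stmt_6 {Ω : Type*} [MeasureSpace Ω] [IsProbabilityMeasure (ℙ : Measure Ω)]
    (θ c : ℝ) (hθ : 0 < θ) (hc : 1 < c)
    (N : Ω → ℕ) (hmN : Measurable N)
    (hN : ∀ k : ℕ, ℙ {ω | N ω = k} =
      ENNReal.ofReal (Real.exp (-θ) * θ ^ k / (Nat.factorial k)))
    (s : ℕ → ℝ) (hs : Tendsto s atTop atTop)
    (hcs : ∀ n, ∃ m : ℕ, c * s n = (m : ℝ)) :
    Tendsto (fun n =>
        -(1 / (s n * Real.log (s n))) *
          Real.log ((ℙ {ω | c * s n < (N ω : ℝ) + 1}).toReal))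
      atTop (nhds c) := by
  have hlogs : Tendsto (fun n => Real.log (s n)) atTop atTop :=
    Real.tendsto_log_atTop.comp hs
  have hts : Tendsto (fun n => s n * Real.log (s n)) atTop atTop :=
    hs.atTop_mul_atTop₀ hlogs
  have h1 : Tendsto (fun n => 1 / (s n * Real.log (s n))) atTop (nhds 0) := by
    simp only [one_div]
    exact tendsto_inv_atTop_zero.comp hts
  have h2 : Tendsto (fun n => 1 / Real.log (s n)) atTop (nhds 0) := by
    simp only [one_div]
    exact tendsto_inv_atTop_zero.comp hlogs
  have hg : Tendsto (fun n => c + ((θ - Real.log 2) * (1 / (s n * Real.log (s n)))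
      + (c * (Real.log c - Real.log θ - 1)) * (1 / Real.log (s n)))) atTop (nhds c) := by
    have := (h1.const_mul (θ - Real.log 2)).add
      (h2.const_mul (c * (Real.log c - Real.log θ - 1)))
    simpa using tendsto_const_nhds.add this
  have hh : Tendsto (fun n => c + (θ * (1 / (s n * Real.log (s n)))
      + (c * (Real.log c - Real.log θ)) * (1 / Real.log (s n)))) atTop (nhds c) := by
    have := (h1.const_mul θ).add (h2.const_mul (c * (Real.log c - Real.log θ)))
    simpa using tendsto_const_nhds.add this
  have key : ∀ n, max 2 (2 * θ) ≤ s n →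
      (c + ((θ - Real.log 2) * (1 / (s n * Real.log (s n)))
          + (c * (Real.log c - Real.log θ - 1)) * (1 / Real.log (s n)))
        ≤ -(1 / (s n * Real.log (s n))) *
          Real.log ((ℙ {ω | c * s n < (N ω : ℝ) + 1}).toReal)) ∧
      (-(1 / (s n * Real.log (s n))) *
          Real.log ((ℙ {ω | c * s n < (N ω : ℝ) + 1}).toReal)
        ≤ c + (θ * (1 / (s n * Real.log (s n)))
          + (c * (Real.log c - Real.log θ)) * (1 / Real.log (s n)))) := by
    intro n hn
    obtain ⟨m, hm⟩ := hcs n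
    set t := s n with ht_def
    have ht2 : (2:ℝ) ≤ t := le_trans (le_max_left _ _) hn
    have htθ : 2 * θ ≤ t := le_trans (le_max_right _ _) hn
    have ht1 : (1:ℝ) < t := by linarith
    have ht0 : (0:ℝ) < t := by linarith
    have hc0 : (0:ℝ) < c := by linarith
    have hlt : 0 < Real.log t := Real.log_pos ht1
    have htl : 0 < t * Real.log t := mul_pos ht0 hlt
    have hmt : (m:ℝ) = c * t := hm.symm
    have hm1 : (1:ℝ) ≤ (m:ℝ) := by nlinarith
    have hm2θ : 2 * θ ≤ (m:ℝ) + 1 := by nlinarith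
    have hset : {ω | c * t < (N ω : ℝ) + 1} = {ω | m ≤ N ω} := by
      ext ω
      simp only [mem_setOf_eq, ← hmt]
      rw [show ((N ω : ℝ) + 1) = ((N ω + 1 : ℕ) : ℝ) by push_cast; ring,
        Nat.cast_lt, Nat.lt_add_one_iff]
    rw [hset]
    set a : ℝ := Real.exp (-θ) * θ ^ m / (Nat.factorial m) with ha_def
    have ha : 0 < a := div_pos (mul_pos (Real.exp_pos _) (pow_pos hθ _))
      (by exact_mod_cast Nat.factorial_pos m)
    set p : ℝ := (ℙ {ω | m ≤ N ω}).toReal with hp_def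
    have hp_lb : a ≤ p := by
      rw [hp_def, ← ENNReal.ofReal_le_iff_le_toReal (measure_ne_top _ _), ← hN m]
      exact measure_mono (fun ω hω => le_of_eq hω.symm)
    have hp_ub : p ≤ 2 * a := by
      apply ENNReal.toReal_le_of_le_ofReal (by positivity)
      exact tail_ub θ hθ N hN m hm2θ
    have hp0 : 0 < p := lt_of_lt_of_le ha hp_lb
    have hloga : Real.log a = -θ + m * Real.log θ - Real.log (Nat.factorial m) := by
      rw [ha_def, Real.log_div (by positivity) (by exact_mod_cast (Nat.factorial_pos m).ne'),
        Real.log_mul (Real.exp_ne_zero _) (by positivity), Real.log_exp, Real.log_pow]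
    have hlogp_lb : Real.log a ≤ Real.log p := Real.log_le_log ha hp_lb
    have hlogp_ub : Real.log p ≤ Real.log 2 + Real.log a := by
      calc Real.log p ≤ Real.log (2 * a) := Real.log_le_log hp0 hp_ub
        _ = Real.log 2 + Real.log a := Real.log_mul (by norm_num) ha.ne'
    have hmm : (m:ℝ) * Real.log m = c * t * (Real.log c + Real.log t) := by
      rw [hmt, Real.log_mul hc0.ne' ht0.ne']
    have e1 : (m:ℝ) * Real.log θ = c * t * Real.log θ := by rw [hmt]
    have hfu := logfac_ub m
    have hfl := logfac_lb m
    have hLform : -(1 / (t * Real.log t)) * Real.log p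
        = (-Real.log p) / (t * Real.log t) := by ring
    have hnum_lb : θ - Real.log 2 + c * t * (Real.log c - Real.log θ - 1)
        + c * t * Real.log t ≤ -Real.log p := by nlinarith [hmt]
    have hnum_ub : -Real.log p ≤ θ + c * t * (Real.log c - Real.log θ)
        + c * t * Real.log t := by nlinarith [hmt]
    constructor
    · have hgform : c + ((θ - Real.log 2) * (1 / (t * Real.log t))
          + (c * (Real.log c - Real.log θ - 1)) * (1 / Real.log t))
          = (θ - Real.log 2 + c * t * (Real.log c - Real.log θ - 1)
            + c * t * Real.log t) / (t * Real.log t) := by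
        field_simp
        ring
      rw [hgform, hLform]
      exact div_le_div_of_nonneg_right hnum_lb htl.le
    · have hhform : c + (θ * (1 / (t * Real.log t))
          + (c * (Real.log c - Real.log θ)) * (1 / Real.log t))
          = (θ + c * t * (Real.log c - Real.log θ)
            + c * t * Real.log t) / (t * Real.log t) := by
        field_simp
        ring
      rw [hhform, hLform]
      exact div_le_div_of_nonneg_right hnum_ub htl.le
  refine tendsto_of_tendsto_of_tendsto_of_le_of_le' hg hh ?_ ?_
  · filter_upwards [hs.eventually_ge_atTop (max 2 (2 * θ))] with n hn
    exact (key n hn).1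
  · filter_upwards [hs.eventually_ge_atTop (max 2 (2 * θ))] with n hn
    exact (key n hn).2
end

section
/- Let D² ∼ Exp(λπ) be independent of N ∼ Poisson(θ), K > 0, β > 2, and define Ŝ = log(1 + K·D^{−β})/(N + 1). Then lim inf_{s→∞} (1/s)·log P(Ŝ > s) ≥ −2/β; combined with P(Ŝ > s) ≤ P(log(1+K·D^{−β}) > s), one concludes lim_{s→∞} −(1/s)·log P(Ŝ > s) = 2/β. -/
open MeasureTheory ProbabilityTheory Real Set Filter

private lemma one_lt_exp'' {s : ℝ} (hs : 0 < s) : 1 < Real.exp s := by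
  calc (1:ℝ) = Real.exp 0 := Real.exp_zero.symm
  _ < Real.exp s := Real.exp_lt_exp.mpr hs

private lemma slopelem' :
    Tendsto (fun x : ℝ => (1 - Real.exp (-x)) / x) (nhdsWithin 0 (Set.Ioi 0)) (nhds 1) := by
  have h : HasDerivAt (fun x : ℝ => 1 - Real.exp (-x)) 1 0 := by
    have h0 : HasDerivAt (fun x : ℝ => Real.exp (-x)) (-1) 0 := by
      have := (Real.hasDerivAt_exp (-0)).comp 0 (hasDerivAt_neg 0)
      simpa [Function.comp_def] using this
    simpa using h0.const_sub 1
  have h1 := hasDerivAt_iff_tendsto_slope.mp h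
  have h2 := h1.mono_left (nhdsWithin_mono 0 (fun x hx => by simpa using ne_of_gt hx))
  refine h2.congr (fun x => ?_)
  simp [slope_def_field, div_eq_mul_inv]

private lemma key_lim (a b c : ℝ) (ha : 0 < a) (hb : 0 < b) (hc : 0 < c) :
    Tendsto (fun s : ℝ => (1/s) * Real.log (1 - Real.exp (-(c * (a / (Real.exp s - 1)) ^ b))))
      atTop (nhds (-b)) := by
  set g : ℝ → ℝ := fun y => (1 - Real.exp (-y)) / y with hg
  set x : ℝ → ℝ := fun s => c * (a / (Real.exp s - 1)) ^ b with hxdef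
  have hE : Tendsto (fun s : ℝ => Real.exp s - 1) atTop atTop := by
    have := tendsto_atTop_add_const_right atTop (-1) Real.tendsto_exp_atTop
    simpa [sub_eq_add_neg] using this
  have hq : Tendsto (fun s : ℝ => a / (Real.exp s - 1)) atTop (nhds 0) := by
    simpa [div_eq_mul_inv] using hE.inv_tendsto_atTop.const_mul a
  have hrc : ContinuousAt (fun y : ℝ => y ^ b) 0 :=
    Real.continuousAt_rpow_const 0 b (Or.inr hb.le)
  have ht0 : Tendsto (fun s => (a / (Real.exp s - 1)) ^ b) atTop (nhds 0) := by
    have := hrc.tendsto.comp hq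
    simpa [Real.zero_rpow hb.ne', Function.comp_def] using this
  have hx0 : Tendsto x atTop (nhds 0) := by simpa using ht0.const_mul c
  have hEpos : ∀ᶠ s : ℝ in atTop, 0 < Real.exp s - 1 := by
    filter_upwards [eventually_gt_atTop 0] with s hs
    have := one_lt_exp'' hs; linarith
  have hxpos : ∀ᶠ s in atTop, 0 < x s := by
    filter_upwards [hEpos] with s hs
    exact mul_pos hc (Real.rpow_pos_of_pos (div_pos ha hs) b)
  have hxW : Tendsto x atTop (nhdsWithin 0 (Set.Ioi 0)) :=
    tendsto_nhdsWithin_iff.mpr ⟨hx0, hxpos⟩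
  have hlg : Tendsto (fun s => Real.log (g (x s))) atTop (nhds 0) := by
    have h3 : Tendsto (fun y => Real.log (g y)) (nhdsWithin 0 (Set.Ioi 0)) (nhds 0) := by
      have := (Real.continuousAt_log one_ne_zero).tendsto.comp slopelem'
      simpa [Function.comp_def] using this
    exact h3.comp hxW
  have hinv : Tendsto (fun s : ℝ => 1/s) atTop (nhds 0) := by
    simpa [one_div] using tendsto_inv_atTop_zero
  have hl1 : Tendsto (fun s : ℝ => Real.log (1 - Real.exp (-s))) atTop (nhds 0) := by
    have h1 : Tendsto (fun s : ℝ => 1 - Real.exp (-s)) atTop (nhds 1) := by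
      have h2 := Real.tendsto_exp_atBot.comp tendsto_neg_atTop_atBot
      have := h2.const_sub 1
      simpa [Function.comp] using this
    have := (Real.continuousAt_log one_ne_zero).tendsto.comp h1
    simpa [Function.comp_def] using this
  have hF : Tendsto (fun s : ℝ =>
      (1/s) * (Real.log c + b * Real.log a) - b * (1 + (1/s) * Real.log (1 - Real.exp (-s)))
        + (1/s) * Real.log (g (x s))) atTop (nhds (-b)) := by
    have t1 : Tendsto (fun s : ℝ => (1/s) * (Real.log c + b * Real.log a)) atTop (nhds 0) := by
      simpa using hinv.mul_const (Real.log c + b * Real.log a)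
    have t2 : Tendsto (fun s : ℝ => b * (1 + (1/s) * Real.log (1 - Real.exp (-s))))
        atTop (nhds b) := by
      have h4 : Tendsto (fun s : ℝ => (1:ℝ) + (1/s) * Real.log (1 - Real.exp (-s)))
          atTop (nhds 1) := by
        simpa using (tendsto_const_nhds (α := ℝ) (f := atTop) (x := (1:ℝ))).add (hinv.mul hl1)
      simpa using h4.const_mul b
    have t3 : Tendsto (fun s : ℝ => (1/s) * Real.log (g (x s))) atTop (nhds 0) := by
      simpa using hinv.mul hlg
    have := (t1.sub t2).add t3
    simpa using this
  refine Filter.Tendsto.congr' ?_ hF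
  filter_upwards [eventually_gt_atTop 0, hEpos, hxpos] with s hs hEs hxs
  have hgpos : 0 < g (x s) := by
    have hnum : 0 < 1 - Real.exp (-(x s)) := by
      have : Real.exp (-(x s)) < 1 := Real.exp_lt_one_iff.mpr (by linarith)
      linarith
    exact div_pos hnum hxs
  have hxg : 1 - Real.exp (-(x s)) = x s * g (x s) := by
    simp only [hg]
    field_simp [hxs.ne']
  have hlogx : Real.log (x s) = Real.log c + b * (Real.log a - Real.log (Real.exp s - 1)) := by
    rw [hxdef]
    rw [Real.log_mul hc.ne' (Real.rpow_pos_of_pos (div_pos ha hEs) b).ne',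
      Real.log_rpow (div_pos ha hEs), Real.log_div ha.ne' hEs.ne']
  have hlogE : Real.log (Real.exp s - 1) = s + Real.log (1 - Real.exp (-s)) := by
    have hfac : Real.exp s - 1 = Real.exp s * (1 - Real.exp (-s)) := by
      rw [mul_sub, mul_one, ← Real.exp_add]
      simp
    have h1s : 0 < 1 - Real.exp (-s) := by
      have : Real.exp (-s) < 1 := Real.exp_lt_one_iff.mpr (by linarith)
      linarith
    rw [hfac, Real.log_mul (Real.exp_ne_zero s) h1s.ne', Real.log_exp]
  rw [hxg, Real.log_mul hxs.ne' hgpos.ne', hlogx, hlogE]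
  field_simp
  ring

private lemma toReal_one_sub' (x : ℝ) (hx : 0 ≤ x) (hx1 : x ≤ 1) :
    ((1 : ENNReal) - ENNReal.ofReal x).toReal = 1 - x := by
  rw [ENNReal.toReal_sub_of_le
    (by simpa [ENNReal.ofReal_one] using ENNReal.ofReal_le_ofReal hx1) ENNReal.one_ne_top]
  simp [ENNReal.toReal_ofReal hx]

/-- For `Ŝ = log(1 + K·D^{−β})/(N + 1)` with `D² ∼ Exp(λπ)` independent of `N ∼ Poisson(θ)`,
`K > 0`, `β > 2`: `liminf_{s→∞} (1/s)·log P(Ŝ > s) ≥ −2/β`, and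
`lim_{s→∞} −(1/s)·log P(Ŝ > s) = 2/β`. -/
theorem stmt_15 {Ω : Type*} [MeasureSpace Ω] [IsProbabilityMeasure (ℙ : Measure Ω)]
    (lam θ K β : ℝ) (hlam : 0 < lam) (hθ : 0 < θ) (hK : 0 < K) (hβ : 2 < β)
    (D : Ω → ℝ) (hmD : Measurable D) (hDpos : ∀ ω, 0 < D ω)
    (hD2 : ∀ t : ℝ, 0 ≤ t →
      ℙ {ω | t < (D ω) ^ 2} = ENNReal.ofReal (Real.exp (-(lam * Real.pi * t))))
    (N : Ω → ℕ) (hmN : Measurable N)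
    (hN : ∀ k : ℕ, ℙ {ω | N ω = k} =
      ENNReal.ofReal (Real.exp (-θ) * θ ^ k / (Nat.factorial k)))
    (hInd : IndepFun D N ℙ)
    (S : Ω → ℝ)
    (hS : ∀ ω, S ω = Real.log (1 + K * D ω ^ (-β)) / ((N ω : ℝ) + 1)) :
    (-(2 / β) ≤
      Filter.liminf (fun s : ℝ => (1 / s) * Real.log ((ℙ {ω | s < S ω}).toReal)) atTop) ∧
    Tendsto (fun s : ℝ => -(1 / s) * Real.log ((ℙ {ω | s < S ω}).toReal))
      atTop (nhds (2 / β)) := by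
  have hβ0 : (0:ℝ) < β := by linarith
  have hb : (0:ℝ) < 2/β := by positivity
  have hc1 : (0:ℝ) < lam * Real.pi := mul_pos hlam Real.pi_pos
  have hc2 : (0:ℝ) < lam * Real.pi / 2 := by linarith
  have hmD2 : Measurable (fun ω => D ω ^ 2) := hmD.pow_const 2
  -- the two-sided probability bound for each s > 0
  have hbnd : ∀ s : ℝ, 0 < s →
      Real.exp (-θ) *
          (1 - Real.exp (-(lam * Real.pi / 2 * (K / (Real.exp s - 1)) ^ ((2:ℝ)/β)))) ≤
        (ℙ {ω | s < S ω}).toReal ∧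
      (ℙ {ω | s < S ω}).toReal ≤
        1 - Real.exp (-(lam * Real.pi * (K / (Real.exp s - 1)) ^ ((2:ℝ)/β))) := by
    intro s hs
    have hEs : 0 < Real.exp s - 1 := by have := one_lt_exp'' hs; linarith
    set t : ℝ := (K / (Real.exp s - 1)) ^ ((2:ℝ)/β) with htdef
    have ht : 0 < t := Real.rpow_pos_of_pos (div_pos hK hEs) _
    have hAeq : ∀ ω, (s < Real.log (1 + K * D ω ^ (-β))) ↔ D ω ^ 2 < t := by
      intro ω
      have hd : 0 < D ω := hDpos ω
      set d := D ω with hd'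
      have hdb : 0 < d ^ β := Real.rpow_pos_of_pos hd β
      have hneg : d ^ (-β) = (d ^ β)⁻¹ := Real.rpow_neg hd.le β
      have h2 : (0:ℝ) < 1 + K * d ^ (-β) := by
        have h3 : 0 < d ^ (-β) := Real.rpow_pos_of_pos hd _
        nlinarith
      have key2 : (d ^ β) ^ ((2:ℝ)/β) = d ^ 2 := by
        rw [← Real.rpow_natCast d 2, ← Real.rpow_mul hd.le]
        congr 1
        push_cast
        field_simp
      rw [Real.lt_log_iff_exp_lt h2, hneg]
      constructor
      · intro h
        have h3 : d ^ β * (Real.exp s - 1) < K := by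
          have h4 : Real.exp s - 1 < K * (d ^ β)⁻¹ := by linarith
          calc d ^ β * (Real.exp s - 1) < d ^ β * (K * (d ^ β)⁻¹) :=
              mul_lt_mul_of_pos_left h4 hdb
            _ = K := by field_simp
        have h5 : d ^ β < K / (Real.exp s - 1) := (lt_div_iff₀ hEs).mpr h3
        have h6 := Real.rpow_lt_rpow hdb.le h5 hb
        rwa [key2] at h6
      · intro h
        have h5 : d ^ β < K / (Real.exp s - 1) := by
          refine (Real.rpow_lt_rpow_iff hdb.le (div_nonneg hK.le hEs.le) hb).mp ?_
          rwa [key2]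
        have h3 : d ^ β * (Real.exp s - 1) < K := by
          have := (lt_div_iff₀ hEs).mp h5; linarith
        have h4 : Real.exp s - 1 < K * (d ^ β)⁻¹ := by
          have h7 := (lt_div_iff₀ hdb).mpr (by linarith : (Real.exp s - 1) * d ^ β < K)
          rwa [div_eq_mul_inv] at h7
        linarith
    have hmf : Measurable (fun x : ℝ => Real.log (1 + K * x ^ (-β))) :=
      Real.measurable_log.comp (by fun_prop)
    have hmA : MeasurableSet {x : ℝ | s < Real.log (1 + K * x ^ (-β))} :=
      measurableSet_lt measurable_const hmf
    have hL0 : ∀ ω, 0 ≤ Real.log (1 + K * D ω ^ (-β)) := by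
      intro ω
      have h3 : 0 < D ω ^ (-β) := Real.rpow_pos_of_pos (hDpos ω) _
      refine Real.log_nonneg (by nlinarith)
    -- upper bound
    have hsub1 : {ω | s < S ω} ⊆ {ω | D ω ^ 2 < t} := by
      intro ω hω
      refine (hAeq ω).mp ?_
      have h1 : S ω ≤ Real.log (1 + K * D ω ^ (-β)) := by
        rw [hS ω]
        exact div_le_self (hL0 ω) (by exact_mod_cast Nat.le_add_left 1 (N ω))
      exact lt_of_lt_of_le hω h1
    have hup : ℙ {ω | s < S ω} ≤ 1 - ENNReal.ofReal (Real.exp (-(lam * Real.pi * t))) := by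
      calc ℙ {ω | s < S ω} ≤ ℙ {ω | D ω ^ 2 < t} := measure_mono hsub1
        _ ≤ ℙ ({ω | t < D ω ^ 2}ᶜ) := by
            refine measure_mono (fun ω hω => ?_)
            simp only [Set.mem_compl_iff, Set.mem_setOf_eq] at *
            exact not_lt.mpr (le_of_lt hω)
        _ = 1 - ℙ {ω | t < D ω ^ 2} :=
            prob_compl_eq_one_sub (measurableSet_lt measurable_const hmD2)
        _ = 1 - ENNReal.ofReal (Real.exp (-(lam * Real.pi * t))) := by rw [hD2 t ht.le]
    -- lower bound
    have hN0 : ℙ (N ⁻¹' ({0} : Set ℕ)) = ENNReal.ofReal (Real.exp (-θ)) := by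
      have h1 := hN 0
      simpa [Set.preimage, Nat.factorial] using h1
    have hDA : ℙ (D ⁻¹' {x : ℝ | s < Real.log (1 + K * x ^ (-β))}) = ℙ {ω | D ω ^ 2 < t} := by
      congr 1
      ext ω
      simpa using hAeq ω
    have hlow2 : 1 - ENNReal.ofReal (Real.exp (-(lam * Real.pi * (t/2)))) ≤
        ℙ {ω | D ω ^ 2 < t} := by
      calc (1:ENNReal) - ENNReal.ofReal (Real.exp (-(lam * Real.pi * (t/2))))
          = ℙ ({ω | t/2 < D ω ^ 2}ᶜ) := by
            rw [prob_compl_eq_one_sub (measurableSet_lt measurable_const hmD2),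
              hD2 (t/2) (by linarith)]
        _ ≤ ℙ {ω | D ω ^ 2 < t} := by
            refine measure_mono (fun ω hω => ?_)
            simp only [Set.mem_compl_iff, Set.mem_setOf_eq, not_lt] at hω ⊢
            have := sq_nonneg (D ω)
            linarith
    have hsubL : D ⁻¹' {x : ℝ | s < Real.log (1 + K * x ^ (-β))} ∩ N ⁻¹' ({0} : Set ℕ) ⊆
        {ω | s < S ω} := by
      rintro ω ⟨h1, h2⟩
      have hn : N ω = 0 := h2
      simp only [Set.mem_setOf_eq]
      rw [hS ω, hn]
      simp only [Nat.cast_zero, zero_add, div_one]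
      exact h1
    have hind0 := hInd.measure_inter_preimage_eq_mul
      {x : ℝ | s < Real.log (1 + K * x ^ (-β))} ({0} : Set ℕ) hmA (measurableSet_singleton 0)
    have hlowE : (1 - ENNReal.ofReal (Real.exp (-(lam * Real.pi * (t/2))))) *
        ENNReal.ofReal (Real.exp (-θ)) ≤ ℙ {ω | s < S ω} := by
      calc (1 - ENNReal.ofReal (Real.exp (-(lam * Real.pi * (t/2))))) *
            ENNReal.ofReal (Real.exp (-θ))
          ≤ ℙ {ω | D ω ^ 2 < t} * ENNReal.ofReal (Real.exp (-θ)) :=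
            mul_le_mul_left hlow2 _
        _ = ℙ (D ⁻¹' {x : ℝ | s < Real.log (1 + K * x ^ (-β))}) * ℙ (N ⁻¹' ({0} : Set ℕ)) := by
            rw [hDA, hN0]
        _ = ℙ (D ⁻¹' {x : ℝ | s < Real.log (1 + K * x ^ (-β))} ∩ N ⁻¹' ({0} : Set ℕ)) :=
            hind0.symm
        _ ≤ ℙ {ω | s < S ω} := measure_mono hsubL
    constructor
    · -- real lower bound
      have hfin : ℙ {ω | s < S ω} ≠ ⊤ := measure_ne_top _ _
      have h1 := ENNReal.toReal_mono hfin hlowE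
      have hx0 : (0:ℝ) ≤ Real.exp (-(lam * Real.pi * (t/2))) := (Real.exp_pos _).le
      have hx1 : Real.exp (-(lam * Real.pi * (t/2))) ≤ 1 :=
        Real.exp_le_one_iff.mpr (by nlinarith)
      rw [ENNReal.toReal_mul, toReal_one_sub' _ hx0 hx1,
        ENNReal.toReal_ofReal (Real.exp_pos _).le] at h1
      have heq : Real.exp (-(lam * Real.pi * (t/2))) =
          Real.exp (-(lam * Real.pi / 2 * t)) := by ring_nf
      rw [heq] at h1
      linarith
    · -- real upper bound
      have hfin : (1:ENNReal) - ENNReal.ofReal (Real.exp (-(lam * Real.pi * t))) ≠ ⊤ :=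
        ne_top_of_le_ne_top ENNReal.one_ne_top tsub_le_self
      have h1 := ENNReal.toReal_mono hfin hup
      have hx0 : (0:ℝ) ≤ Real.exp (-(lam * Real.pi * t)) := (Real.exp_pos _).le
      have hx1 : Real.exp (-(lam * Real.pi * t)) ≤ 1 :=
        Real.exp_le_one_iff.mpr (by nlinarith)
      rwa [toReal_one_sub' _ hx0 hx1] at h1
  -- positivity of the lower bound
  have hpos : ∀ s : ℝ, 0 < s →
      0 < Real.exp (-θ) *
        (1 - Real.exp (-(lam * Real.pi / 2 * (K / (Real.exp s - 1)) ^ ((2:ℝ)/β)))) := by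
    intro s hs
    have hEs : 0 < Real.exp s - 1 := by have := one_lt_exp'' hs; linarith
    have ht : 0 < (K / (Real.exp s - 1)) ^ ((2:ℝ)/β) :=
      Real.rpow_pos_of_pos (div_pos hK hEs) _
    have h1 : Real.exp (-(lam * Real.pi / 2 * (K / (Real.exp s - 1)) ^ ((2:ℝ)/β))) < 1 :=
      Real.exp_lt_one_iff.mpr (by nlinarith)
    exact mul_pos (Real.exp_pos _) (by linarith)
  -- limits of the two bounds
  have huplim : Tendsto (fun s : ℝ => (1/s) *
      Real.log (1 - Real.exp (-(lam * Real.pi * (K / (Real.exp s - 1)) ^ ((2:ℝ)/β)))))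
      atTop (nhds (-(2/β))) := key_lim K (2/β) (lam * Real.pi) hK hb hc1
  have hinv : Tendsto (fun s : ℝ => 1/s) atTop (nhds 0) := by
    simpa [one_div] using tendsto_inv_atTop_zero
  have hlowlim : Tendsto (fun s : ℝ => (1/s) *
      Real.log (Real.exp (-θ) *
        (1 - Real.exp (-(lam * Real.pi / 2 * (K / (Real.exp s - 1)) ^ ((2:ℝ)/β))))))
      atTop (nhds (-(2/β))) := by
    have hk2 := key_lim K (2/β) (lam * Real.pi / 2) hK hb hc2
    have hsum := (hinv.mul_const (-θ)).add hk2
    refine Filter.Tendsto.congr' ?_ (by simpa using hsum)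
    filter_upwards [eventually_gt_atTop 0] with s hs
    have hEs : 0 < Real.exp s - 1 := by have := one_lt_exp'' hs; linarith
    have ht : 0 < (K / (Real.exp s - 1)) ^ ((2:ℝ)/β) :=
      Real.rpow_pos_of_pos (div_pos hK hEs) _
    have h1 : (0:ℝ) <
        1 - Real.exp (-(lam * Real.pi / 2 * (K / (Real.exp s - 1)) ^ ((2:ℝ)/β))) := by
      have := Real.exp_lt_one_iff.mpr
        (show -(lam * Real.pi / 2 * (K / (Real.exp s - 1)) ^ ((2:ℝ)/β)) < 0 by nlinarith)
      linarith
    rw [Real.log_mul (Real.exp_ne_zero _) h1.ne', Real.log_exp]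
    ring
  -- squeeze
  have hmain : Tendsto (fun s : ℝ => (1/s) * Real.log ((ℙ {ω | s < S ω}).toReal))
      atTop (nhds (-(2/β))) := by
    refine tendsto_of_tendsto_of_tendsto_of_le_of_le' hlowlim huplim ?_ ?_
    · filter_upwards [eventually_gt_atTop 0] with s hs
      have h := hbnd s hs
      have hp0 := hpos s hs
      have h1 := Real.log_le_log hp0 h.1
      exact mul_le_mul_of_nonneg_left h1 (by positivity)
    · filter_upwards [eventually_gt_atTop 0] with s hs
      have h := hbnd s hs
      have hp0 := hpos s hs
      have hppos : 0 < (ℙ {ω | s < S ω}).toReal := lt_of_lt_of_le hp0 h.1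
      have h1 := Real.log_le_log hppos h.2
      exact mul_le_mul_of_nonneg_left h1 (by positivity)
  constructor
  · exact le_of_eq hmain.liminf_eq.symm
  · have := hmain.neg
    simp only [neg_neg] at this
    refine this.congr (fun s => ?_)
    ring
end
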